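/- Let V be a Weibull random variable with scale c > 0 and shape k > 0, let a > 0, let 0 < V_ci < V_r < V_co, let P_r = a·V_r³, and let P_w = a·V³ if V_ci < V ≤ V_r, P_w = P_r if V_r < V ≤ V_co, and P_w = 0 otherwise. Then for every p with a·V_ci³ ≤ p < a·V_r³, the CDF of the harvested wind power satisfies P(P_w ≤ p) = 1 + exp(−(V_co/c)^k) − exp(−p^{k/3}/(a^{k/3}·c^k)); moreover P(P_w ≤ p) = 1 for every p ≥ P_r. (CDF of the harvested wind power.) -/

import Mathlib

open MeasureTheory Real

/-- Weibull density with scale `c > 0` and shape `k > 0` (zero for `v ≤ 0`). -/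
noncomputable def weibullDensity (c k v : ℝ) : ℝ :=
  if 0 < v then (k / c) * (v / c) ^ (k - 1) * Real.exp (-(v / c) ^ k) else 0

/-- Harvested wind power: `a·V³` on `(V_ci, V_r]`, the rated power `P_r = a·V_r³`
on `(V_r, V_co]`, and `0` otherwise. -/
noncomputable def windPower (a Vci Vr Vco v : ℝ) : ℝ :=
  if Vci < v ∧ v ≤ Vr then a * v ^ 3
  else if Vr < v ∧ v ≤ Vco then a * Vr ^ 3
  else 0

open Filter Topology

lemma weibull_nonneg {c k : ℝ} (hc : 0 < c) (hk : 0 < k) (v : ℝ) :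
    0 ≤ weibullDensity c k v := by
  unfold weibullDensity
  split
  · rename_i hv
    have h1 : (0:ℝ) ≤ (v / c) ^ (k - 1) := Real.rpow_nonneg (by positivity) _
    positivity
  · exact le_refl 0

lemma weibull_deriv {c k : ℝ} (hc : 0 < c) (hk : 0 < k) {x : ℝ} (hx : 0 < x) :
    HasDerivAt (fun v => -Real.exp (-(v / c) ^ k)) (weibullDensity c k x) x := by
  have h1 : HasDerivAt (fun v : ℝ => v / c) (1 / c) x := (hasDerivAt_id x).div_const c
  have h2 : HasDerivAt (fun v : ℝ => (v / c) ^ k)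
      (k * (x / c) ^ (k - 1) * (1 / c)) x :=
    (Real.hasDerivAt_rpow_const (p := k) (Or.inl (by positivity))).comp x h1
  have h3 : HasDerivAt (fun v : ℝ => -Real.exp (-(v / c) ^ k))
      (Real.exp (-(x / c) ^ k) * (k * (x / c) ^ (k - 1) * (1 / c))) x := by
    have : HasDerivAt (fun v : ℝ => -Real.exp (-(v / c) ^ k))
        (-(Real.exp (-(x / c) ^ k) * -(k * (x / c) ^ (k - 1) * (1 / c)))) x :=
      (h2.neg.exp).neg
    convert this using 1
    ring
  convert h3 using 1
  rw [weibullDensity, if_pos hx]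
  ring

lemma weibull_tail {c k : ℝ} (hc : 0 < c) (hk : 0 < k) {t : ℝ} (ht : 0 ≤ t) :
    (∫ v in Set.Ioi t, weibullDensity c k v) = Real.exp (-(t / c) ^ k) ∧
      IntegrableOn (weibullDensity c k) (Set.Ioi t) := by
  have hcont : ContinuousWithinAt (fun v => -Real.exp (-(v / c) ^ k)) (Set.Ici t) t := by
    apply ContinuousAt.continuousWithinAt
    have : ContinuousAt (fun v : ℝ => (v / c) ^ k) t := by
      exact (Real.continuousAt_rpow_const _ _ (Or.inr hk.le)).comp
        (continuousAt_id.div_const c)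
    exact (this.neg.rexp).neg
  have hderiv : ∀ x ∈ Set.Ioi t, HasDerivAt (fun v => -Real.exp (-(v / c) ^ k))
      (weibullDensity c k x) x := fun x hx => weibull_deriv hc hk (lt_of_le_of_lt ht hx)
  have hpos : ∀ x ∈ Set.Ioi t, 0 ≤ weibullDensity c k x := fun x _ => weibull_nonneg hc hk x
  have hlim : Tendsto (fun v => -Real.exp (-(v / c) ^ k)) atTop (𝓝 0) := by
    rw [show (0:ℝ) = -0 by ring]
    apply Tendsto.neg
    apply Real.tendsto_exp_neg_atTop_nhds_zero.comp
    exact (tendsto_rpow_atTop hk).comp (tendsto_id.atTop_div_const hc)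
  constructor
  · have := integral_Ioi_of_hasDerivAt_of_nonneg hcont hderiv hpos hlim
    rw [this]; ring
  · exact integrableOn_Ioi_deriv_of_nonneg hcont hderiv hpos hlim

lemma weibull_lint_Ioi {c k : ℝ} (hc : 0 < c) (hk : 0 < k) {t : ℝ} (ht : 0 ≤ t) :
    (∫⁻ v in Set.Ioi t, ENNReal.ofReal (weibullDensity c k v)) =
      ENNReal.ofReal (Real.exp (-(t / c) ^ k)) := by
  obtain ⟨h1, h2⟩ := weibull_tail hc hk ht
  rw [← h1, ← ofReal_integral_eq_lintegral_ofReal h2]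
  exact Filter.Eventually.of_forall fun x => weibull_nonneg hc hk x

lemma weibull_lint_Iic {c k : ℝ} (hc : 0 < c) (hk : 0 < k) {t : ℝ} (ht : 0 ≤ t) :
    (∫⁻ v in Set.Iic t, ENNReal.ofReal (weibullDensity c k v)) =
      1 - ENNReal.ofReal (Real.exp (-(t / c) ^ k)) := by
  have htotal : (∫⁻ v, ENNReal.ofReal (weibullDensity c k v)) = 1 := by
    have h0 : (∫⁻ v in Set.Iic (0:ℝ), ENNReal.ofReal (weibullDensity c k v)) = 0 := by
      rw [setLIntegral_congr_fun measurableSet_Iic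
        (fun v (hv : v ∈ Set.Iic (0:ℝ)) => by
          rw [weibullDensity, if_neg (not_lt.2 hv), ENNReal.ofReal_zero])]
      exact lintegral_zero
    have := lintegral_add_compl (fun v => ENNReal.ofReal (weibullDensity c k v))
      (measurableSet_Iic (a := (0:ℝ))) (μ := volume)
    rw [Set.compl_Iic] at this
    rw [← this, h0, zero_add, weibull_lint_Ioi hc hk le_rfl]
    simp [Real.zero_rpow hk.ne', hc.ne']
  have hsplit := lintegral_add_compl (fun v => ENNReal.ofReal (weibullDensity c k v))
    (measurableSet_Iic (a := t)) (μ := volume)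
  rw [Set.compl_Iic, htotal, weibull_lint_Ioi hc hk ht] at hsplit
  rw [← hsplit]
  rw [ENNReal.add_sub_cancel_right (by exact ENNReal.ofReal_ne_top)]


/-- **CDF of the harvested wind power.**
For `a·V_ci³ ≤ p < a·V_r³`,
`P(P_w ≤ p) = 1 + exp(−(V_co/c)^k) − exp(−p^{k/3}/(a^{k/3}·c^k))`,
and `P(P_w ≤ p) = 1` for `p ≥ P_r = a·V_r³`. -/
theorem wind_power_cdf
    {Ω : Type*} [MeasurableSpace Ω] (μ : Measure Ω) [IsProbabilityMeasure μ]
    (c k a Vci Vr Vco : ℝ) (hc : 0 < c) (hk : 0 < k) (ha : 0 < a)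
    (hVci : 0 < Vci) (hVr : Vci < Vr) (hVco : Vr < Vco)
    (V : Ω → ℝ) (hV : Measurable V)
    (hlaw : μ.map V = volume.withDensity fun v => ENNReal.ofReal (weibullDensity c k v)) :
    (∀ p : ℝ, a * Vci ^ 3 ≤ p → p < a * Vr ^ 3 →
      (μ {ω | windPower a Vci Vr Vco (V ω) ≤ p}).toReal =
        1 + Real.exp (-(Vco / c) ^ k)
          - Real.exp (-p ^ (k / 3) / (a ^ (k / 3) * c ^ k))) ∧
    (∀ p : ℝ, a * Vr ^ 3 ≤ p →
      (μ {ω | windPower a Vci Vr Vco (V ω) ≤ p}).toReal = 1) := by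
  have hVr0 : 0 < Vr := hVci.trans hVr
  have hVco0 : 0 < Vco := hVr0.trans hVco
  have hmeas : ∀ s : Set ℝ, MeasurableSet s →
      μ (V ⁻¹' s) = ∫⁻ v in s, ENNReal.ofReal (weibullDensity c k v) := by
    intro s hs
    rw [← Measure.map_apply hV hs, hlaw, withDensity_apply _ hs]
  constructor
  · intro p hp1 hp2
    have hp0 : 0 < p := lt_of_lt_of_le (by positivity) hp1
    have hpa : 0 < p / a := div_pos hp0 ha
    set v0 : ℝ := (p / a) ^ ((1:ℝ)/3) with hv0def
    have hv0pos : 0 < v0 := Real.rpow_pos_of_pos hpa _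
    have hcube : v0 ^ 3 = p / a := by
      rw [hv0def, ← Real.rpow_natCast ((p / a) ^ ((1:ℝ)/3)) 3, ← Real.rpow_mul hpa.le]
      norm_num
    have hVciv0 : Vci ≤ v0 := by
      have h1 : Vci ^ 3 ≤ v0 ^ 3 := by
        rw [hcube]; rw [le_div_iff₀ ha]; linarith [hp1]
      exact le_of_pow_le_pow_left₀ (by norm_num) hv0pos.le h1
    have hv0Vr : v0 < Vr := by
      have h1 : v0 ^ 3 < Vr ^ 3 := by
        rw [hcube]; rw [div_lt_iff₀ ha]; linarith [hp2]
      by_contra hcon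
      push_neg at hcon
      exact absurd (pow_le_pow_left₀ hVr0.le hcon 3) (not_le.2 h1)
    have hset : {ω | windPower a Vci Vr Vco (V ω) ≤ p}
        = V ⁻¹' (Set.Iic v0 ∪ Set.Ioi Vco) := by
      ext ω
      simp only [Set.mem_setOf_eq, Set.mem_preimage, Set.mem_union, Set.mem_Iic, Set.mem_Ioi]
      set v := V ω with hv
      unfold windPower
      split_ifs with h1 h2
      · constructor
        · intro hle
          left
          have hv3 : v ^ 3 ≤ v0 ^ 3 := by rw [hcube]; rw [le_div_iff₀ ha] at *; linarith
          exact le_of_pow_le_pow_left₀ (by norm_num) hv0pos.le hv3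
        · rintro (h | h)
          · have hvpos : 0 < v := hVci.trans h1.1
            have : v ^ 3 ≤ v0 ^ 3 := pow_le_pow_left₀ hvpos.le h 3
            rw [hcube] at this
            calc a * v ^ 3 ≤ a * (p / a) := by nlinarith
              _ = p := by field_simp
          · linarith [h1.2, hVco]
      · constructor
        · intro hle; linarith
        · rintro (h | h)
          · linarith [h2.1]
          · linarith [h2.2]
      · constructor
        · intro _
          by_cases hv1 : v ≤ v0
          · exact Or.inl hv1
          · push_neg at hv1
            push_neg at h1 h2
            right
            have hvVci : Vci < v := lt_of_le_of_lt hVciv0 hv1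
            have hvVr : Vr < v := lt_of_not_ge fun hle => absurd (h1 hvVci) (not_lt.2 hle)
            exact lt_of_not_ge fun hle => absurd (h2 hvVr) (not_lt.2 hle)
        · intro _; linarith
    have hdisj : Disjoint (Set.Iic v0) (Set.Ioi Vco) :=
      Set.Iic_disjoint_Ioi (by linarith)
    rw [hset, hmeas _ (measurableSet_Iic.union measurableSet_Ioi),
      lintegral_union measurableSet_Ioi hdisj,
      weibull_lint_Iic hc hk hv0pos.le, weibull_lint_Ioi hc hk hVco0.le]
    have he0le : ENNReal.ofReal (Real.exp (-(v0 / c) ^ k)) ≤ 1 := by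
      rw [ENNReal.ofReal_le_one]
      rw [Real.exp_le_one_iff]
      have : (0:ℝ) ≤ (v0 / c) ^ k := Real.rpow_nonneg (by positivity) _
      linarith
    rw [ENNReal.toReal_add (by
        exact ne_top_of_le_ne_top ENNReal.one_ne_top (tsub_le_self.trans le_rfl))
      ENNReal.ofReal_ne_top,
      ENNReal.toReal_sub_of_le he0le ENNReal.one_ne_top]
    rw [ENNReal.toReal_one, ENNReal.toReal_ofReal (Real.exp_nonneg _),
      ENNReal.toReal_ofReal (Real.exp_nonneg _)]
    have hexp : (v0 / c) ^ k = p ^ (k/3) / (a ^ (k/3) * c ^ k) := by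
      rw [Real.div_rpow hv0pos.le hc.le, hv0def, ← Real.rpow_mul hpa.le,
        one_div, inv_mul_eq_div, Real.div_rpow hp0.le ha.le, div_div]
    rw [hexp]
    ring
  · intro p hp
    have hset : {ω | windPower a Vci Vr Vco (V ω) ≤ p} = Set.univ := by
      ext ω
      simp only [Set.mem_setOf_eq, Set.mem_univ, iff_true]
      unfold windPower
      split_ifs with h1 h2
      · have hvpos : 0 < V ω := hVci.trans h1.1
        have : (V ω) ^ 3 ≤ Vr ^ 3 := pow_le_pow_left₀ hvpos.le h1.2 3
        nlinarith
      · exact hp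
      · have : (0:ℝ) < a * Vr ^ 3 := by positivity
        linarith
    rw [hset, measure_univ, ENNReal.toReal_one]
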